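/- arXiv:2506.23943 — 8 statements merged into one kernel-verified Lean document; each statement's English description precedes it below -/
import Mathlib

section
/- Let G = K_{m,n} with parts A and B, and suppose the edge weights are such that every vertex of the part placed second in a separated layout is incident to edges of each weight 1, 2, ..., min{m,n}. Then every separated PQ-layout of ⟨G,w⟩ requires at least min{m,n} pages. Consequently, the separated priority queue number of K_{m,n} equals min{m,n}. -/
/-- **Separated lower bound for `K_{m,n}`.**  Suppose the part `B = Fin n` is placed
second in a separated layout (every vertex of `A = Fin m` precedes every vertex of `B`),
and the weights are such that every vertex `b ∈ B` is incident to edges of each weight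
`1, 2, …, min m n`.  Then any page assignment avoiding forbidden configurations uses
at least `min m n` pages. -/
theorem bipartite_separated_lower (m n : ℕ) (hm : 1 ≤ m) (hn : 1 ≤ n)
    (w : Fin m → Fin n → ℝ)
    (hw : ∀ b : Fin n, ∀ i : ℕ, 1 ≤ i → i ≤ min m n → ∃ a : Fin m, w a b = i)
    (p : ℕ) (ordA : Fin m → ℕ) (ordB : Fin n → ℕ)
    (hsep : ∀ a b, ordA a < ordB b)
    (hA : Function.Injective ordA) (hB : Function.Injective ordB)
    (page : Fin m → Fin n → Fin p)
    (hvalid : ∀ a b a' b', page a b = page a' b' →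
      ordA a' < ordB b → ordB b < ordB b' → w a b ≤ w a' b') :
    min m n ≤ p := by
  set k := min m n with hk
  have hkn : k ≤ n := min_le_right m n
  -- the injection of Fin k into Fin n
  set g : Fin k → Fin n := Fin.castLE hkn with hg
  have hginj : Function.Injective g := Fin.castLE_injective hkn
  set h : Fin k → ℕ := ordB ∘ g with hh
  have hhinj : Function.Injective h := hB.comp hginj
  set σ := Tuple.sort h with hσ
  have hmono : StrictMono (h ∘ σ) :=
    (Tuple.monotone_sort h).strictMono_of_injective (hhinj.comp σ.injective)
  -- b i : the chosen B-vertices, ordB strictly decreasing in i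
  set b : Fin k → Fin n := fun i => g (σ i.rev) with hbdef
  have hbord : ∀ i j : Fin k, i < j → ordB (b j) < ordB (b i) := by
    intro i j hij
    have : j.rev < i.rev := Fin.rev_lt_rev.mpr hij
    exact hmono this
  -- choose the edge of weight i+1 at b i
  have hwa : ∀ i : Fin k, ∃ a : Fin m, w a (b i) = ((i : ℕ) + 1 : ℕ) := by
    intro i
    exact hw (b i) ((i : ℕ) + 1) (Nat.le_add_left 1 _) (Nat.succ_le_of_lt i.isLt)
  choose a ha using hwa
  -- the page map is injective
  have hFinj : Function.Injective (fun i : Fin k => page (a i) (b i)) := by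
    intro i j hij
    by_contra hne
    rcases lt_or_gt_of_ne hne with hlt | hlt
    · have := hvalid (a j) (b j) (a i) (b i) hij.symm (hsep (a i) (b j)) (hbord i j hlt)
      rw [ha i, ha j] at this
      have : ((j : ℕ) + 1 : ℕ) ≤ ((i : ℕ) + 1 : ℕ) := by exact_mod_cast this
      omega
    · have := hvalid (a i) (b i) (a j) (b j) hij (hsep (a j) (b i)) (hbord j i hlt)
      rw [ha i, ha j] at this
      have : ((i : ℕ) + 1 : ℕ) ≤ ((j : ℕ) + 1 : ℕ) := by exact_mod_cast this
      omega
  have := Fintype.card_le_of_injective _ hFinj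
  simpa using this
end

section
/- Consider an M × N boolean (0/1) matrix, where rows are indexed by 1..M (weights, bottom to top) and columns by 1..N (left to right), in which every column contains exactly M/2 ones (assume M even, M = 2N). Define a strictly decreasing path of ones as a sequence of cells (r_1,c_1), ..., (r_k,c_k) with value 1 such that r_1 > r_2 > ⋯ > r_k and c_1 < c_2 < ⋯ < c_k. Then there exists such a path of length at least ⌈((3−√5)/4)·M⌉. -/
open Finset

/-- Length of the longest strictly decreasing (rows down, columns right) path of ones
starting at cell `p`. -/
def Lval {N : ℕ} (A : Fin (2*N) → Fin N → Bool) (p : Fin (2*N) × Fin N) : ℕ :=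
  if A p.1 p.2 then
    1 + ((Finset.univ.filter fun q : Fin (2*N) × Fin N =>
        A q.1 q.2 = true ∧ q.1 < p.1 ∧ p.2 < q.2).attach.sup
      fun q => Lval A q.1)
  else 0
termination_by N - p.2.val
decreasing_by
  have hq := q.2
  simp only [Finset.mem_filter] at hq
  have h2 : p.2.val < q.1.2.val := hq.2.2.2
  have h3 := q.1.2.isLt
  omega

private lemma Lval_pos {N : ℕ} (A : Fin (2*N) → Fin N → Bool) {p : Fin (2*N) × Fin N}
    (hp : A p.1 p.2 = true) : 1 ≤ Lval A p := by
  rw [Lval, if_pos hp]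
  omega

private lemma Lval_lt {N : ℕ} (A : Fin (2*N) → Fin N → Bool) {p q : Fin (2*N) × Fin N}
    (hp : A p.1 p.2 = true) (hq : A q.1 q.2 = true)
    (h1 : q.1 < p.1) (h2 : p.2 < q.2) : Lval A q < Lval A p := by
  conv_rhs => rw [Lval, if_pos hp]
  have hmem : q ∈ (Finset.univ.filter fun q : Fin (2*N) × Fin N =>
      A q.1 q.2 = true ∧ q.1 < p.1 ∧ p.2 < q.2) := by
    simp [hq, h1, h2]
  have := Finset.le_sup (f := fun q : {x // x ∈ (Finset.univ.filter fun q : Fin (2*N) × Fin N =>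
      A q.1 q.2 = true ∧ q.1 < p.1 ∧ p.2 < q.2)} => Lval A q.1)
      (Finset.mem_attach _ ⟨q, hmem⟩)
  simp only at this
  omega

private lemma list_head_down : ∀ (l : List ℕ), l.Chain' (· > ·) →
    ∀ x ∈ l.head?, l.length ≤ x + 1 := by
  intro l
  induction l with
  | nil => simp
  | cons a l ih =>
    intro hl x hx
    simp only [List.head?_cons, Option.mem_def, Option.some.injEq] at hx
    subst hx
    simp only [List.Chain', List.isChain_cons] at hl
    cases l with
    | nil => simp
    | cons b l' =>
      have hb := hl.1 b (by simp)
      have := ih hl.2 b (by simp)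
      simp only [List.length_cons] at this ⊢
      omega

private lemma list_head_up {n : ℕ} : ∀ (l : List ℕ), l.Chain' (· < ·) →
    (∀ x ∈ l, x < n) → ∀ x ∈ l.head?, x + l.length ≤ n := by
  intro l
  induction l with
  | nil => simp
  | cons a l ih =>
    intro hl hb x hx
    simp only [List.head?_cons, Option.mem_def, Option.some.injEq] at hx
    subst hx
    simp only [List.Chain', List.isChain_cons] at hl
    cases l with
    | nil =>
      have := hb a (by simp)
      simpa using this
    | cons b l' =>
      have hab := hl.1 b (by simp)
      have := ih hl.2 (fun y hy => hb y (by simp [hy])) b (by simp)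
      simp only [List.length_cons] at this ⊢
      omega

private lemma Lval_path {N : ℕ} (A : Fin (2*N) → Fin N → Bool) :
    ∀ n (p : Fin (2*N) × Fin N), A p.1 p.2 = true → Lval A p = n →
    ∃ l : List (Fin (2*N) × Fin N), l.length = n ∧ l.head? = some p ∧
      l.Chain' (fun p q => q.1 < p.1 ∧ p.2 < q.2) ∧ ∀ q ∈ l, A q.1 q.2 = true := by
  intro n
  induction n using Nat.strong_induction_on with
  | _ n ih =>
    intro p hp hL
    rw [Lval, if_pos hp] at hL
    rcases (Finset.univ.filter fun q : Fin (2*N) × Fin N =>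
        A q.1 q.2 = true ∧ q.1 < p.1 ∧ p.2 < q.2).attach.eq_empty_or_nonempty with he | hne
    · rw [he] at hL
      simp only [Finset.sup_empty, Nat.bot_eq_zero] at hL
      refine ⟨[p], by simp; omega, rfl, List.isChain_singleton _, by simpa using hp⟩
    · obtain ⟨q, _, hsup⟩ := Finset.exists_mem_eq_sup _ hne
        (fun q : {x // x ∈ (Finset.univ.filter fun q : Fin (2*N) × Fin N =>
          A q.1 q.2 = true ∧ q.1 < p.1 ∧ p.2 < q.2)} => Lval A q.1)
      have hqs := Finset.mem_filter.mp q.2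
      have hqval : Lval A q.1 = n - 1 := by omega
      have hlt : n - 1 < n := by omega
      obtain ⟨l, hlen, hhead, hchain, hmem2⟩ := ih (n-1) hlt q.1 hqs.2.1 hqval
      refine ⟨p :: l, by simp [hlen]; omega, rfl, ?_, ?_⟩
      · simp only [List.Chain', List.isChain_cons]
        refine ⟨?_, hchain⟩
        intro b hb
        rw [hhead] at hb
        simp only [Option.mem_def, Option.some.injEq] at hb
        subst hb
        exact ⟨hqs.2.2.1, hqs.2.2.2⟩
      · intro r hr
        rcases List.mem_cons.mp hr with h | h
        · subst h; exact hp
        · exact hmem2 r h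

private lemma Lval_bounds {N : ℕ} (A : Fin (2*N) → Fin N → Bool) {p : Fin (2*N) × Fin N}
    (hp : A p.1 p.2 = true) :
    Lval A p ≤ p.1.val + 1 ∧ p.2.val + Lval A p ≤ N := by
  obtain ⟨l, hlen, hhead, hchain, -⟩ := Lval_path A (Lval A p) p hp rfl
  constructor
  · have hc : (l.map fun q : Fin (2*N) × Fin N => q.1.val).Chain' (· > ·) := by
      simp only [List.Chain', List.isChain_map]
      exact hchain.imp (fun a b h => h.1)
    have := list_head_down _ hc p.1.val (by rw [List.head?_map, hhead]; rfl)
    simpa [hlen] using this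
  · have hc : (l.map fun q : Fin (2*N) × Fin N => q.2.val).Chain' (· < ·) := by
      simp only [List.Chain', List.isChain_map]
      exact hchain.imp (fun a b h => h.2)
    have := list_head_up _ hc (by
      intro x hx
      simp only [List.mem_map] at hx
      obtain ⟨q, -, rfl⟩ := hx
      exact q.2.isLt) p.2.val (by rw [List.head?_map, hhead]; rfl)
    simpa [hlen] using this



/-- **Decreasing path of ones in a column-balanced boolean matrix.**  Let `M = 2N`
and let `A` be an `M × N` boolean matrix (rows = weights bottom-to-top, columns =
vertices left-to-right) in which every column contains exactly `M / 2 = N` ones.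
Then there is a strictly decreasing path of ones (rows strictly decreasing, columns
strictly increasing) of length at least `⌈((3 − √5)/4)·M⌉`. -/
theorem decreasing_path_in_matrix (N : ℕ) (hN : 1 ≤ N)
    (A : Fin (2 * N) → Fin N → Bool)
    (hcol : ∀ j : Fin N, (Finset.univ.filter fun i => A i j = true).card = N) :
    ∃ (k : ℕ) (r : Fin k → Fin (2 * N)) (c : Fin k → Fin N),
      ⌈(3 - Real.sqrt 5) / 4 * (2 * N : ℝ)⌉₊ ≤ k ∧
      StrictAnti r ∧ StrictMono c ∧ ∀ i, A (r i) (c i) = true := by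
  classical
  set Ones : Finset (Fin (2*N) × Fin N) :=
    Finset.univ.filter (fun p => A p.1 p.2 = true) with hOnes
  -- cardinality of the set of ones
  have hcard : Ones.card = N * N := by
    rw [hOnes, Finset.card_filter, Fintype.sum_prod_type_right]
    have h0 : ∀ j : Fin N, (∑ i : Fin (2*N), if A i j = true then 1 else 0) = N := by
      intro j
      rw [← Finset.card_filter]
      exact hcol j
    rw [Finset.sum_congr rfl (fun j _ => h0 j)]
    simp [mul_comm]
  -- Ones is nonempty
  have hone : Ones.Nonempty := by
    have h0 : (Finset.univ.filter fun i => A i ⟨0, hN⟩ = true).Nonempty := by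
      rw [← Finset.card_pos, hcol]; omega
    obtain ⟨i, hi⟩ := h0
    exact ⟨(i, ⟨0, hN⟩), by
      simp only [hOnes, Finset.mem_filter, Finset.mem_univ, true_and]
      exact (Finset.mem_filter.mp hi).2⟩
  set k : ℕ := Ones.sup (fun p => Lval A p) with hk
  obtain ⟨pm, hpmem, hpk⟩ := Finset.exists_mem_eq_sup Ones hone (fun p => Lval A p)
  have hpA : A pm.1 pm.2 = true := (Finset.mem_filter.mp hpmem).2
  have hkpm : k = Lval A pm := hk.trans hpk
  have hk1 : 1 ≤ k := le_trans (Lval_pos A hpA) hkpm.ge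
  have hkN : k ≤ N := by
    have h1 := (Lval_bounds A hpA).2
    omega
  -- level set cardinality bound
  have hlevel : ∀ t ∈ Finset.Icc 1 k, (Ones.filter fun p => Lval A p = t).card ≤ 3*N + 1 - 2*t := by
    intro t ht
    rw [Finset.mem_Icc] at ht
    have hmain : (Ones.filter fun p => Lval A p = t).card ≤ (Finset.Icc (t-1) (3*N-t-1)).card := by
      apply Finset.card_le_card_of_injOn (fun p => p.1.val + p.2.val)
      · intro p hp
        rw [Finset.mem_coe, Finset.mem_filter] at hp
        have hpA' : A p.1 p.2 = true := (Finset.mem_filter.mp hp.1).2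
        have hb := Lval_bounds A hpA'
        rw [hp.2] at hb
        have h1 := p.1.isLt
        rw [Finset.mem_coe, Finset.mem_Icc]
        beta_reduce
        omega
      · intro p hp q hq hsum
        rw [Finset.mem_coe, Finset.mem_filter] at hp hq
        have hpA' : A p.1 p.2 = true := (Finset.mem_filter.mp hp.1).2
        have hqA' : A q.1 q.2 = true := (Finset.mem_filter.mp hq.1).2
        simp only at hsum
        rcases Nat.lt_trichotomy p.2.val q.2.val with h | h | h
        · exfalso
          have hrow : p.1.val ≤ q.1.val := by
            by_contra hcon
            push_neg at hcon
            have := Lval_lt A hpA' hqA' hcon h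
            omega
          omega
        · have h2 : p.2 = q.2 := Fin.ext h
          have h1 : p.1 = q.1 := Fin.ext (by omega)
          exact Prod.ext h1 h2
        · exfalso
          have hrow : q.1.val ≤ p.1.val := by
            by_contra hcon
            push_neg at hcon
            have := Lval_lt A hqA' hpA' hcon h
            omega
          omega
    rw [Nat.card_Icc] at hmain
    omega
  -- fiberwise decomposition
  have hsum : Ones.card = ∑ t ∈ Finset.Icc 1 k, (Ones.filter fun p => Lval A p = t).card := by
    apply Finset.card_eq_sum_card_fiberwise
    intro p hp
    rw [Finset.mem_coe, Finset.mem_Icc]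
    exact ⟨Lval_pos A (Finset.mem_filter.mp hp).2, Finset.le_sup hp⟩
  have hNat : N * N ≤ ∑ t ∈ Finset.Icc 1 k, (3*N + 1 - 2*t) := by
    rw [← hcard, hsum]
    exact Finset.sum_le_sum hlevel
  have hgauss : (∑ t ∈ Finset.Icc 1 k, t) * 2 = k * (k + 1) := by
    clear_value k
    clear hk hkpm hk1 hkN hlevel hsum hNat
    induction k with
    | zero => simp
    | succ n ih =>
      rw [Finset.sum_Icc_succ_top (by omega), add_mul, ih]
      ring
  -- pass to the reals
  have hreal : (N:ℝ) * N + (k:ℝ) * k ≤ 3 * N * k := by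
    have h1 : ((N * N : ℕ) : ℝ) ≤ ∑ t ∈ Finset.Icc 1 k, ((3*N + 1 - 2*t : ℕ) : ℝ) := by
      rw [← Nat.cast_sum]
      exact_mod_cast hNat
    have h2 : ∑ t ∈ Finset.Icc 1 k, ((3*N + 1 - 2*t : ℕ) : ℝ)
        = ∑ t ∈ Finset.Icc 1 k, ((3*(N:ℝ) + 1) - 2*t) := by
      apply Finset.sum_congr rfl
      intro t ht
      rw [Finset.mem_Icc] at ht
      have h3 : 2*t ≤ 3*N+1 := by omega
      rw [Nat.cast_sub h3]
      push_cast
      ring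
    have hS : ((∑ t ∈ Finset.Icc 1 k, t : ℕ) : ℝ) = ∑ t ∈ Finset.Icc 1 k, (t:ℝ) :=
      Nat.cast_sum _ _
    have h4 : ∑ t ∈ Finset.Icc 1 k, ((3*(N:ℝ) + 1) - 2*t)
        = (k:ℝ) * (3*(N:ℝ) + 1) - 2 * ((∑ t ∈ Finset.Icc 1 k, t : ℕ) : ℝ) := by
      rw [Finset.sum_sub_distrib, Finset.sum_const, Nat.card_Icc, hS, ← Finset.mul_sum]
      push_cast [nsmul_eq_mul, Nat.add_sub_cancel]
      ring
    have h5 : ((∑ t ∈ Finset.Icc 1 k, t : ℕ) : ℝ) * 2 = (k:ℝ) * ((k:ℝ) + 1) := by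
      exact_mod_cast hgauss
    push_cast at h1
    nlinarith [h1, h2, h4, h5]
  -- the quadratic inequality gives the lower bound on k
  have hceil : ⌈(3 - Real.sqrt 5) / 4 * (2 * N : ℝ)⌉₊ ≤ k := by
    rw [Nat.ceil_le]
    have h5 : Real.sqrt 5 ^ 2 = 5 := Real.sq_sqrt (by norm_num)
    have hs : 0 ≤ Real.sqrt 5 := Real.sqrt_nonneg 5
    have hNpos : (1:ℝ) ≤ N := by exact_mod_cast hN
    have hmain : 3*(N:ℝ) - 2*k ≤ Real.sqrt 5 * N := by
      rcases le_or_gt (3*(N:ℝ) - 2*k) 0 with h | h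
      · exact h.trans (by positivity)
      · have hsq : (3*(N:ℝ) - 2*k)^2 ≤ (Real.sqrt 5 * N)^2 := by
          rw [mul_pow, h5]
          nlinarith [hreal]
        calc 3*(N:ℝ) - 2*k ≤ |3*(N:ℝ) - 2*k| := le_abs_self _
          _ = Real.sqrt ((3*(N:ℝ) - 2*k)^2) := (Real.sqrt_sq_eq_abs _).symm
          _ ≤ Real.sqrt ((Real.sqrt 5 * N)^2) := Real.sqrt_le_sqrt hsq
          _ = Real.sqrt 5 * N := Real.sqrt_sq (by positivity)
    linarith
  -- extract the path
  obtain ⟨l, hlen, hhead, hchain, hmem⟩ := Lval_path A k pm hpA hpk.symm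
  refine ⟨k, fun m => (l.get (Fin.cast hlen.symm m)).1,
      fun m => (l.get (Fin.cast hlen.symm m)).2, hceil, ?_, ?_, ?_⟩
  · haveI : IsTrans (Fin (2*N) × Fin N) (fun p q => q.1 < p.1 ∧ p.2 < q.2) :=
      ⟨fun a b c h1 h2 => ⟨h2.1.trans h1.1, h1.2.trans h2.2⟩⟩
    have hpw := (List.isChain_iff_pairwise.mp hchain)
    rw [List.pairwise_iff_get] at hpw
    intro a b hab
    exact (hpw _ _ (by simpa using hab)).1
  · haveI : IsTrans (Fin (2*N) × Fin N) (fun p q => q.1 < p.1 ∧ p.2 < q.2) :=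
      ⟨fun a b c h1 h2 => ⟨h2.1.trans h1.1, h1.2.trans h2.2⟩⟩
    have hpw := (List.isChain_iff_pairwise.mp hchain)
    rw [List.pairwise_iff_get] at hpw
    intro a b hab
    exact (hpw _ _ (by simpa using hab)).2
  · intro i
    exact hmem _ (l.get_mem _)
end

section
/- Every edge-weighted rooted tree ⟨T,w⟩ with root r admits a PQ-layout with one page in which, for every non-root vertex v, the parent of v precedes v in the linear ordering. -/
open Finset

section Aux

variable {V : Type} [Fintype V] [DecidableEq V]

/-- The frontier of a set `S`: vertices outside `S` whose parent is in `S`. -/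
noncomputable def pqFrontier (r : V) (par : V → V) (S : Finset V) : Finset V :=
  @Finset.filter _ (fun u => u ∉ S ∧ par u ∈ S ∧ u ≠ r) (Classical.decPred _) univ

lemma mem_pqFrontier {r : V} {par : V → V} {S : Finset V} {u : V} :
    u ∈ pqFrontier r par S ↔ u ∉ S ∧ par u ∈ S ∧ u ≠ r := by
  simp [pqFrontier]

/-- Pick a minimum-weight frontier vertex (or `r` if the frontier is empty). -/
noncomputable def pqNext (r : V) (par : V → V) (w : V → ℝ) (S : Finset V) : V :=
  if h : (pqFrontier r par S).Nonempty then
    (Finset.exists_min_image (pqFrontier r par S) w h).choose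
  else r

lemma pqNext_spec {r : V} {par : V → V} {w : V → ℝ} {S : Finset V}
    (h : (pqFrontier r par S).Nonempty) :
    pqNext r par w S ∈ pqFrontier r par S ∧
      ∀ u ∈ pqFrontier r par S, w (pqNext r par w S) ≤ w u := by
  rw [pqNext, dif_pos h]
  obtain ⟨hmem, hmin⟩ := (Finset.exists_min_image (pqFrontier r par S) w h).choose_spec
  exact ⟨hmem, hmin⟩

lemma pqFrontier_nonempty {r : V} {par : V → V} {depth : V → ℕ}
    (hdepth : ∀ v, v ≠ r → depth (par v) < depth v)
    {S : Finset V} (hr : r ∈ S) (hS : ∃ u, u ∉ S) :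
    (pqFrontier r par S).Nonempty := by
  classical
  have hT : (univ.filter (fun u => u ∉ S)).Nonempty := by
    obtain ⟨u, hu⟩ := hS
    exact ⟨u, by simp [hu]⟩
  obtain ⟨u, huT, humin⟩ := Finset.exists_min_image _ depth hT
  have huS : u ∉ S := (Finset.mem_filter.mp huT).2
  have hur : u ≠ r := fun h => huS (h ▸ hr)
  refine ⟨u, mem_pqFrontier.mpr ⟨huS, ?_, hur⟩⟩
  by_contra hp
  have : depth u ≤ depth (par u) := humin _ (by simp [hp])
  exact absurd (hdepth u hur) (not_lt.mpr this)

/-- The chain of sets built by the Prim-style process. -/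
noncomputable def pqChain (r : V) (par : V → V) (w : V → ℝ) : ℕ → Finset V
  | 0 => {r}
  | n + 1 => insert (pqNext r par w (pqChain r par w n)) (pqChain r par w n)

lemma pqChain_mono {r : V} {par : V → V} {w : V → ℝ} :
    Monotone (pqChain r par w) := by
  apply monotone_nat_of_le_succ
  intro n
  exact Finset.subset_insert _ _

lemma r_mem_pqChain {r : V} {par : V → V} {w : V → ℝ} (n : ℕ) :
    r ∈ pqChain r par w n :=
  pqChain_mono (Nat.zero_le n) (by simp [pqChain])

lemma pqChain_card {r : V} {par : V → V} {w : V → ℝ} {depth : V → ℕ}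
    (hdepth : ∀ v, v ≠ r → depth (par v) < depth v) (n : ℕ) :
    pqChain r par w n = univ ∨ n + 1 ≤ (pqChain r par w n).card := by
  induction n with
  | zero => right; simp [pqChain]
  | succ n ih =>
    rcases ih with h | h
    · left
      simp [pqChain, h]
    · by_cases hu : pqChain r par w n = univ
      · left; simp [pqChain, hu]
      · right
        have hex : ∃ u, u ∉ pqChain r par w n := by
          by_contra hc
          push_neg at hc
          exact hu (Finset.eq_univ_iff_forall.mpr hc)
        have hne := pqFrontier_nonempty hdepth (r_mem_pqChain n) hex
        have hmem := (pqNext_spec (w := w) hne).1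
        have hnot : pqNext r par w (pqChain r par w n) ∉ pqChain r par w n :=
          (mem_pqFrontier.mp hmem).1
        have heq : pqChain r par w (n+1) = insert (pqNext r par w (pqChain r par w n)) (pqChain r par w n) := rfl
        rw [heq, Finset.card_insert_of_notMem hnot]
        omega

lemma pqChain_univ {r : V} {par : V → V} {w : V → ℝ} {depth : V → ℕ}
    (hdepth : ∀ v, v ≠ r → depth (par v) < depth v) :
    pqChain r par w (Fintype.card V) = univ := by
  rcases pqChain_card (w := w) hdepth (Fintype.card V) with h | h
  · exact h
  · exfalso
    have := Finset.card_le_univ (pqChain r par w (Fintype.card V))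
    omega

lemma pqChain_exists {r : V} {par : V → V} {w : V → ℝ} {depth : V → ℕ}
    (hdepth : ∀ v, v ≠ r → depth (par v) < depth v) (v : V) :
    ∃ n, v ∈ pqChain r par w n :=
  ⟨Fintype.card V, by rw [pqChain_univ hdepth]; exact Finset.mem_univ v⟩

end Aux

/-- **One-page PQ-layout of a rooted tree.**  A rooted tree is given by a root `r`
and a parent map `par` together with a depth function certifying well-foundedness
(`depth (par v) < depth v` for `v ≠ r`).  The weight of a non-root vertex `v` is
the weight `w v` of the edge `v — par v`.  There is a spine ordering `f` such that
every non-root vertex is preceded by its parent, and no forbidden configuration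
occurs: there are no two tree edges `(par v, v)`, `(par v', v')` with
`f (par v') < f v < f v'` and `w v > w v'`. -/
theorem tree_one_page {V : Type} [Fintype V] (r : V) (par : V → V)
    (depth : V → ℕ) (hdr : depth r = 0)
    (hdepth : ∀ v, v ≠ r → depth (par v) < depth v)
    (w : V → ℝ) :
    ∃ f : V → ℕ, Function.Injective f ∧
      (∀ v, v ≠ r → f (par v) < f v) ∧
      (∀ v v', v ≠ r → v' ≠ r →
        f (par v') < f v → f v < f v' → w v ≤ w v') := by
  classical
  set f : V → ℕ := fun v => Nat.find (pqChain_exists (w := w) hdepth v) with hf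
  have hspec : ∀ v, v ∈ pqChain r par w (f v) := fun v =>
    Nat.find_spec (pqChain_exists (w := w) hdepth v)
  have hmem_iff : ∀ v n, v ∈ pqChain r par w n ↔ f v ≤ n := by
    intro v n
    constructor
    · intro h
      exact Nat.find_min' _ h
    · intro h
      exact pqChain_mono h (hspec v)
  -- if f v = n+1 then v is the chosen minimum-weight frontier vertex of step n
  have hstep : ∀ v n, f v = n + 1 →
      v = pqNext r par w (pqChain r par w n) ∧
      v ∈ pqFrontier r par (pqChain r par w n) := by
    intro v n hv
    have h1 : v ∈ pqChain r par w (n + 1) := hv ▸ hspec v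
    have h2 : v ∉ pqChain r par w n := by
      intro hc
      have := (hmem_iff v n).mp hc
      omega
    have hveq : v = pqNext r par w (pqChain r par w n) := by
      have : v ∈ insert (pqNext r par w (pqChain r par w n)) (pqChain r par w n) := h1
      rcases Finset.mem_insert.mp this with h | h
      · exact h
      · exact absurd h h2
    have hne : (pqFrontier r par (pqChain r par w n)).Nonempty := by
      by_contra hc
      rw [Finset.not_nonempty_iff_eq_empty] at hc
      have : pqNext r par w (pqChain r par w n) = r := by
        rw [pqNext, dif_neg (by rw [hc]; exact Finset.not_nonempty_empty)]
      exact h2 (by rw [hveq, this]; exact r_mem_pqChain n)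
    exact ⟨hveq, hveq ▸ (pqNext_spec hne).1⟩
  have hf0 : ∀ v, f v = 0 → v = r := by
    intro v hv
    have : v ∈ pqChain r par w 0 := hv ▸ hspec v
    simpa [pqChain] using this
  refine ⟨f, ?_, ?_, ?_⟩
  · -- injectivity
    intro u v huv
    rcases Nat.eq_zero_or_eq_succ_pred (f u) with h0 | hs
    · rw [hf0 u h0, hf0 v (huv ▸ h0)]
    · set n := f u - 1
      have hu : f u = n + 1 := hs
      have hv : f v = n + 1 := huv ▸ hu
      rw [(hstep u n hu).1, (hstep v n hv).1]
  · -- parent precedes child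
    intro v hvr
    rcases Nat.eq_zero_or_eq_succ_pred (f v) with h0 | hs
    · exact absurd (hf0 v h0) hvr
    · set n := f v - 1
      have hv : f v = n + 1 := hs
      obtain ⟨-, hfr⟩ := hstep v n hv
      have hpar : par v ∈ pqChain r par w n := (mem_pqFrontier.mp hfr).2.1
      have := (hmem_iff (par v) n).mp hpar
      omega
  · -- layout condition
    intro v v' hvr hv'r h1 h2
    rcases Nat.eq_zero_or_eq_succ_pred (f v) with h0 | hs
    · exact absurd (hf0 v h0) hvr
    · set n := f v - 1
      have hv : f v = n + 1 := hs
      obtain ⟨hveq, -⟩ := hstep v n hv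
      have hne : (pqFrontier r par (pqChain r par w n)).Nonempty := by
        by_contra hc
        rw [Finset.not_nonempty_iff_eq_empty] at hc
        have : pqNext r par w (pqChain r par w n) = r := by
          rw [pqNext, dif_neg (by rw [hc]; exact Finset.not_nonempty_empty)]
        exact hvr (hveq.trans this)
      have hpar' : par v' ∈ pqChain r par w n := by
        rw [hmem_iff]; omega
      have hv'n : v' ∉ pqChain r par w n := by
        rw [hmem_iff]; omega
      have hv'f : v' ∈ pqFrontier r par (pqChain r par w n) :=
        mem_pqFrontier.mpr ⟨hv'n, hpar', hv'r⟩
      have := (pqNext_spec (w := w) hne).2 v' hv'f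
      rw [hveq]
      exact this
end

section
/- Let C be a caterpillar (a tree consisting of a path p_1 p_2 ... p_k plus leaves each attached to some p_i), with any edge weights w. Then the linear ordering obtained by placing, for each i in order 1,...,k, first all leaves attached to p_i (for i = 1: before p_1; for i ≥ 2: between p_{i-1} and p_i) and then p_i, yields a one-page PQ-layout of ⟨C,w⟩ with p_k as the rightmost vertex. -/
/-- Endpoints of the edges of a caterpillar with spine `p_0, …, p_{k-1}` (type `Fin k`)
and leaves `L`, each leaf `l` attached to the spine vertex `attach l`.
A spine edge is `{p_i, p_{i+1}}`, a leaf edge is `{p_(attach l), l}`. -/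
def catEnds (k : ℕ) {L : Type} (attach : L → Fin k) :
    ({i : Fin k // (i : ℕ) + 1 < k} ⊕ L) → (Fin k ⊕ L) × (Fin k ⊕ L)
  | .inl i => (Sum.inl i.1, Sum.inl ⟨(i.1 : ℕ) + 1, i.2⟩)
  | .inr l => (Sum.inl (attach l), Sum.inr l)

/-- Weight of a caterpillar edge: `ws i` for the spine edge `p_i p_{i+1}`,
`wl l` for the leaf edge at leaf `l`. -/
def catW (k : ℕ) {L : Type} (ws : Fin k → ℝ) (wl : L → ℝ) :
    ({i : Fin k // (i : ℕ) + 1 < k} ⊕ L) → ℝ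
  | .inl i => ws i.1
  | .inr l => wl l

/-- **One-page PQ-layout of a caterpillar.**  Placing, for each `i = 0, …, k-1` in
order, first the leaves attached to `p_i` and then `p_i` itself (spine in order,
each leaf strictly between its predecessor spine vertex and its attachment vertex)
yields a one-page PQ-layout with the last spine vertex `p_{k-1}` rightmost:
no two edges `e, e'` satisfy `lpos e' < rpos e < rpos e'` with `w e > w e'`. -/
theorem caterpillar_one_page (k : ℕ) (hk : 1 ≤ k) {L : Type} [Fintype L]
    (attach : L → Fin k) (ws : Fin k → ℝ) (wl : L → ℝ) :
    ∃ f : Fin k ⊕ L → ℕ, Function.Injective f ∧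
      (∀ i j : Fin k, i < j → f (Sum.inl i) < f (Sum.inl j)) ∧
      (∀ l : L, ∀ j : Fin k, j < attach l → f (Sum.inl j) < f (Sum.inr l)) ∧
      (∀ l : L, f (Sum.inr l) < f (Sum.inl (attach l))) ∧
      (∀ v : Fin k ⊕ L, v ≠ Sum.inl ⟨k - 1, by omega⟩ →
        f v < f (Sum.inl ⟨k - 1, by omega⟩)) ∧
      (∀ e e' : {i : Fin k // (i : ℕ) + 1 < k} ⊕ L,
        min (f (catEnds k attach e').1) (f (catEnds k attach e').2) <
          max (f (catEnds k attach e).1) (f (catEnds k attach e).2) →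
        max (f (catEnds k attach e).1) (f (catEnds k attach e).2) <
          max (f (catEnds k attach e').1) (f (catEnds k attach e').2) →
        catW k ws wl e ≤ catW k ws wl e') := by
  classical
  set n := Fintype.card L with hn
  set g : L ≃ Fin n := Fintype.equivFin L with hg
  set f : Fin k ⊕ L → ℕ := fun v =>
    match v with
    | Sum.inl i => ((i : ℕ) + 1) * (n + 1)
    | Sum.inr l => (attach l : ℕ) * (n + 1) + 1 + (g l : ℕ)
    with hf
  have hfl : ∀ i : Fin k, f (Sum.inl i) = ((i : ℕ) + 1) * (n + 1) := fun _ => rfl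
  have hfr : ∀ l : L, f (Sum.inr l) = (attach l : ℕ) * (n + 1) + 1 + (g l : ℕ) :=
    fun _ => rfl
  have hglt : ∀ l : L, (g l : ℕ) < n := fun l => (g l).2
  have hmul : ∀ a b : ℕ, a < b → a * (n + 1) < b * (n + 1) := fun a b h =>
    Nat.mul_lt_mul_of_lt_of_le h le_rfl (Nat.succ_pos n)
  have hleafband : ∀ l : L,
      (attach l : ℕ) * (n + 1) < f (Sum.inr l) ∧
      f (Sum.inr l) < ((attach l : ℕ) + 1) * (n + 1) := by
    intro l
    rw [hfr]
    constructor
    · omega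
    · have := hglt l
      have : (attach l : ℕ) * (n + 1) + 1 + (g l : ℕ) <
          (attach l : ℕ) * (n + 1) + (n + 1) := by omega
      calc (attach l : ℕ) * (n + 1) + 1 + (g l : ℕ)
          < (attach l : ℕ) * (n + 1) + (n + 1) := this
        _ = ((attach l : ℕ) + 1) * (n + 1) := by ring
  refine ⟨f, ?_, ?_, ?_, ?_, ?_, ?_⟩
  · -- injectivity
    intro u v huv
    match u, v with
    | Sum.inl i, Sum.inl j =>
        rw [hfl, hfl] at huv
        have : (i : ℕ) = (j : ℕ) := by
          have := Nat.eq_of_mul_eq_mul_right (Nat.succ_pos n) huv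
          omega
        exact congrArg Sum.inl (Fin.ext this)
    | Sum.inl i, Sum.inr l =>
        exfalso
        rw [hfl, hfr] at huv
        have h1 : (((i : ℕ) + 1) * (n + 1)) % (n + 1) = 0 := Nat.mul_mod_left _ _
        have h2 : ((attach l : ℕ) * (n + 1) + 1 + (g l : ℕ)) % (n + 1)
            = (1 + (g l : ℕ)) % (n + 1) := by
          rw [add_assoc, add_comm ((attach l : ℕ) * (n + 1)) _,
            Nat.add_mul_mod_self_right]
        have h3 : (1 + (g l : ℕ)) % (n + 1) = 1 + (g l : ℕ) :=
          Nat.mod_eq_of_lt (by have := hglt l; omega)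
        rw [huv, h2, h3] at h1
        omega
    | Sum.inr l, Sum.inl i =>
        exfalso
        rw [hfl, hfr] at huv
        have h1 : (((i : ℕ) + 1) * (n + 1)) % (n + 1) = 0 := Nat.mul_mod_left _ _
        have h2 : ((attach l : ℕ) * (n + 1) + 1 + (g l : ℕ)) % (n + 1)
            = (1 + (g l : ℕ)) % (n + 1) := by
          rw [add_assoc, add_comm ((attach l : ℕ) * (n + 1)) _,
            Nat.add_mul_mod_self_right]
        have h3 : (1 + (g l : ℕ)) % (n + 1) = 1 + (g l : ℕ) :=
          Nat.mod_eq_of_lt (by have := hglt l; omega)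
        rw [← huv, h2, h3] at h1
        omega
    | Sum.inr l, Sum.inr l' =>
        rw [hfr, hfr] at huv
        have h2 : ((attach l : ℕ) * (n + 1) + 1 + (g l : ℕ)) % (n + 1)
            = 1 + (g l : ℕ) := by
          rw [add_assoc, add_comm ((attach l : ℕ) * (n + 1)) _,
            Nat.add_mul_mod_self_right]
          exact Nat.mod_eq_of_lt (by have := hglt l; omega)
        have h2' : ((attach l' : ℕ) * (n + 1) + 1 + (g l' : ℕ)) % (n + 1)
            = 1 + (g l' : ℕ) := by
          rw [add_assoc, add_comm ((attach l' : ℕ) * (n + 1)) _,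
            Nat.add_mul_mod_self_right]
          exact Nat.mod_eq_of_lt (by have := hglt l'; omega)
        have : (g l : ℕ) = (g l' : ℕ) := by
          have := congrArg (· % (n + 1)) huv
          simp only [h2, h2'] at this
          omega
        exact congrArg Sum.inr (g.injective (Fin.ext this))
  · intro i j hij
    rw [hfl, hfl]
    exact hmul _ _ (by exact_mod_cast Nat.succ_lt_succ hij)
  · intro l j hj
    rw [hfl]
    have h1 : ((j : ℕ) + 1) * (n + 1) ≤ (attach l : ℕ) * (n + 1) :=
      Nat.mul_le_mul_right _ (by exact_mod_cast hj)
    exact lt_of_le_of_lt h1 (hleafband l).1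
  · intro l
    rw [hfl]
    exact (hleafband l).2
  · intro v hv
    have hlast : f (Sum.inl ⟨k - 1, by omega⟩) = k * (n + 1) := by
      rw [hfl]; simp; congr 1; omega
    rw [hlast]
    match v with
    | Sum.inl i =>
        rw [hfl]
        have : (i : ℕ) + 1 < k := by
          have hik : (i : ℕ) < k := i.2
          rcases Nat.lt_or_ge ((i : ℕ) + 1) k with h | h
          · exact h
          · exfalso; apply hv; congr 1; apply Fin.ext; simp; omega
        exact hmul _ _ this
    | Sum.inr l =>
        have h1 := (hleafband l).2
        have h2 : ((attach l : ℕ) + 1) * (n + 1) ≤ k * (n + 1) :=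
          Nat.mul_le_mul_right _ (by have := (attach l).2; omega)
        exact lt_of_lt_of_le h1 h2
  · -- the PQ condition: the hypotheses are contradictory
    have key : ∀ e : {i : Fin k // (i : ℕ) + 1 < k} ⊕ L, ∃ m : ℕ,
        max (f (catEnds k attach e).1) (f (catEnds k attach e).2) = (m + 1) * (n + 1) ∧
        m * (n + 1) ≤ min (f (catEnds k attach e).1) (f (catEnds k attach e).2) := by
      intro e
      match e with
      | Sum.inl i =>
          refine ⟨(i.1 : ℕ) + 1, ?_, ?_⟩
          · show max (f (Sum.inl i.1)) (f (Sum.inl ⟨(i.1 : ℕ) + 1, i.2⟩)) = _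
            rw [hfl, hfl]
            simp only [Fin.val_mk]
            rw [max_eq_right (Nat.mul_le_mul_right _ (by omega))]
          · show _ ≤ min (f (Sum.inl i.1)) (f (Sum.inl ⟨(i.1 : ℕ) + 1, i.2⟩))
            rw [hfl, hfl]
            simp only [Fin.val_mk]
            rw [min_eq_left (Nat.mul_le_mul_right _ (by omega))]
      | Sum.inr l =>
          refine ⟨(attach l : ℕ), ?_, ?_⟩
          · show max (f (Sum.inl (attach l))) (f (Sum.inr l)) = _
            rw [max_eq_left (le_of_lt (hleafband l).2)]
          · show _ ≤ min (f (Sum.inl (attach l))) (f (Sum.inr l))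
            rw [min_eq_right (le_of_lt (hleafband l).2)]
            exact le_of_lt (hleafband l).1
    intro e e' h1 h2
    exfalso
    obtain ⟨m, hmx, hmn⟩ := key e
    obtain ⟨m', hmx', hmn'⟩ := key e'
    rw [hmx] at h1 h2
    rw [hmx'] at h2
    have hmm : m + 1 < m' + 1 := by
      by_contra h
      exact absurd h2 (not_lt.mpr (Nat.mul_le_mul_right _ (by omega)))
    have : (m + 1) * (n + 1) ≤ m' * (n + 1) := Nat.mul_le_mul_right _ (by omega)
    omega
end

section
/- Every edge-weighted cycle ⟨C,w⟩ admits a one-page PQ-layout with any prescribed vertex as the leftmost vertex. Concretely, starting from the prescribed vertex, repeatedly appending, among the two current 'frontier' neighbors of the placed segment of the cycle, the one whose connecting edge has smaller weight, yields an ordering with no forbidden configuration. -/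
namespace CycleOnePageAux

variable (n : ℕ) (W : ℕ → ℝ)

/-- number of rightward greedy steps after `t` steps -/
noncomputable def gr : ℕ → ℕ
  | 0 => 0
  | t+1 => gr t + (if W (gr t) ≤ W (n - 1 - (t - gr t)) then 1 else 0)

lemma gr_succ_def (t : ℕ) :
    gr n W (t+1) = gr n W t + (if W (gr n W t) ≤ W (n - 1 - (t - gr n W t)) then 1 else 0) :=
  rfl

lemma gr_le (t : ℕ) : gr n W t ≤ t := by
  induction t with
  | zero => simp [gr]
  | succ t ih => rw [gr_succ_def]; split <;> omega

lemma gr_succ (t : ℕ) : gr n W (t+1) = gr n W t ∨ gr n W (t+1) = gr n W t + 1 := by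
  rw [gr_succ_def]; split <;> omega

def placedBy (x t : ℕ) : Prop := x ≤ gr n W t ∨ n - x ≤ t - gr n W t

noncomputable instance (x t : ℕ) : Decidable (placedBy n W x t) := by
  unfold placedBy; infer_instance

lemma placedBy_mono {x s t : ℕ} (h : s ≤ t) (hp : placedBy n W x s) : placedBy n W x t := by
  induction t with
  | zero => exact Nat.le_zero.mp h ▸ hp
  | succ t ih =>
    rcases Nat.lt_or_ge s (t+1) with h' | h'
    · have hp' := ih (by omega)
      have h1 := gr_le n W t
      have h2 := gr_succ n W t
      unfold placedBy at *
      omega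
    · have : s = t + 1 := by omega
      exact this ▸ hp

lemma placedBy_exists (x : ℕ) : placedBy n W x (n - 1) := by
  have h1 := gr_le n W (n-1)
  unfold placedBy
  omega

/-- position of vertex at cyclic distance `x` (rightward) from `v0` -/
noncomputable def g (x : ℕ) : ℕ := Nat.find ⟨n - 1, placedBy_exists n W x⟩

lemma g_le_iff (x t : ℕ) : g n W x ≤ t ↔ placedBy n W x t := by
  constructor
  · intro h
    exact placedBy_mono n W h (Nat.find_spec ⟨n - 1, placedBy_exists n W x⟩)
  · intro h
    exact Nat.find_le h

lemma g_le (x : ℕ) : g n W x ≤ n - 1 := (g_le_iff n W x (n-1)).mpr (placedBy_exists n W x)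

lemma g_zero : g n W 0 = 0 := by
  have := (g_le_iff n W 0 0).mpr (by unfold placedBy; left; exact Nat.zero_le _)
  omega

lemma g_pos {x : ℕ} (hx1 : 1 ≤ x) (hx2 : x < n) : 1 ≤ g n W x := by
  by_contra h
  have := (g_le_iff n W x 0).mp (by omega)
  unfold placedBy at this
  simp [gr] at this
  omega

lemma g_inj {x y : ℕ} (hx : x < n) (hy : y < n) (h : g n W x = g n W y) : x = y := by
  cases ht : g n W x with
  | zero =>
    have h1 := (g_le_iff n W x 0).mp (by omega)
    have h2 := (g_le_iff n W y 0).mp (by omega)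
    unfold placedBy at h1 h2
    simp [gr] at h1 h2
    omega
  | succ s =>
    have h1 : placedBy n W x (s+1) := (g_le_iff n W x (s+1)).mp (by omega)
    have h2 : ¬ placedBy n W x s := fun hp => by have := (g_le_iff n W x s).mpr hp; omega
    have h3 : placedBy n W y (s+1) := (g_le_iff n W y (s+1)).mp (by omega)
    have h4 : ¬ placedBy n W y s := fun hp => by have := (g_le_iff n W y s).mpr hp; omega
    have h5 := gr_succ n W s
    have h6 := gr_le n W s
    unfold placedBy at h1 h2 h3 h4
    omega

/-- the greedy step dichotomy -/
lemma step (t : ℕ) :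
    (W (gr n W t) ≤ W (n - 1 - (t - gr n W t)) ∧ gr n W (t+1) = gr n W t + 1) ∨
    (¬ W (gr n W t) ≤ W (n - 1 - (t - gr n W t)) ∧ gr n W (t+1) = gr n W t) := by
  by_cases h : W (gr n W t) ≤ W (n - 1 - (t - gr n W t))
  · left; exact ⟨h, by rw [gr_succ_def, if_pos h]⟩
  · right; exact ⟨h, by simp [gr_succ_def, if_neg h]⟩

attribute [irreducible] gr g

/-- Main combinatorial lemma: no forbidden configuration. -/
lemma main (hn : 3 ≤ n) {k k' : ℕ} (hk : k < n) (hk' : k' < n)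
    (h1 : min (g n W k') (g n W ((k'+1) % n)) < max (g n W k) (g n W ((k+1) % n)))
    (h2 : max (g n W k) (g n W ((k+1) % n)) < max (g n W k') (g n W ((k'+1) % n))) :
    W k ≤ W k' := by
  obtain ⟨k1, hk1, hk1d⟩ : ∃ m, (k+1) % n = m ∧ ((k = n-1 ∧ m = 0) ∨ (k+1 < n ∧ m = k+1)) := by
    rcases Nat.lt_or_ge k (n-1) with h | h
    · exact ⟨k+1, Nat.mod_eq_of_lt (by omega), Or.inr ⟨by omega, rfl⟩⟩
    · have hke : k = n - 1 := by omega
      refine ⟨0, ?_, Or.inl ⟨hke, rfl⟩⟩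
      rw [hke, show n - 1 + 1 = n by omega, Nat.mod_self]
  obtain ⟨k1', hk1', hk1d'⟩ : ∃ m, (k'+1) % n = m ∧ ((k' = n-1 ∧ m = 0) ∨ (k'+1 < n ∧ m = k'+1)) := by
    rcases Nat.lt_or_ge k' (n-1) with h | h
    · exact ⟨k'+1, Nat.mod_eq_of_lt (by omega), Or.inr ⟨by omega, rfl⟩⟩
    · have hke : k' = n - 1 := by omega
      refine ⟨0, ?_, Or.inl ⟨hke, rfl⟩⟩
      rw [hke, show n - 1 + 1 = n by omega, Nat.mod_self]
  rw [hk1, hk1'] at h1 h2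
  clear hk1 hk1'
  have hk1n : k1 < n := by omega
  have hinj : ¬ (g n W k = g n W k1) := by
    intro h
    have := g_inj n W hk hk1n h
    omega
  obtain ⟨T, hT⟩ : ∃ T, max (g n W k) (g n W k1) = T := ⟨_, rfl⟩
  rw [hT] at h1 h2
  have hgk := g_le n W k
  have hgk1 := g_le n W k1
  have hgk' := g_le n W k'
  have hgk1' := g_le n W k1'
  have hT1 : 1 ≤ T := by clear * - h1; omega
  have hTn : T ≤ n - 2 := by clear * - h2 hgk' hgk1'; omega
  obtain ⟨t, htdef⟩ : ∃ t, T - 1 = t := ⟨_, rfl⟩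
  have hTt : T = t + 1 := by omega
  obtain ⟨a, ha⟩ : ∃ a, gr n W t = a := ⟨_, rfl⟩
  have hat : a ≤ t := ha ▸ gr_le n W t
  have Pk_t := g_le_iff n W k t
  have Pk_T := g_le_iff n W k T
  have Pk1_t := g_le_iff n W k1 t
  have Pk1_T := g_le_iff n W k1 T
  have Pk'_t := g_le_iff n W k' t
  have Pk1'_t := g_le_iff n W k1' t
  have Pk'_T := g_le_iff n W k' T
  have Pk1'_T := g_le_iff n W k1' T
  unfold placedBy at Pk_t Pk_T Pk1_t Pk1_T Pk'_t Pk'_T Pk1'_t Pk1'_T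
  rw [ha] at Pk_t Pk1_t Pk'_t Pk1'_t
  -- which endpoint of edge i is completed exactly at time T
  have Di : (g n W k = T ∧ g n W k1 ≤ t) ∨ (g n W k1 = T ∧ g n W k ≤ t) := by
    clear * - hT hinj hTt; omega
  -- edge j: one endpoint placed by time t, the other after T
  have Dj : (g n W k' ≤ t ∧ T < g n W k1') ∨ (g n W k1' ≤ t ∧ T < g n W k') := by
    clear * - h1 h2 hTt; omega
  clear hT hinj h1 h2
  have hstep := step n W t
  rw [← hTt, ha] at hstep
  rcases hstep with ⟨hW, hgr⟩ | ⟨hW, hgr⟩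
  · -- rightward step
    rw [hgr] at Pk_T Pk1_T Pk'_T Pk1'_T
    have hi : k = a := by
      rcases Di with ⟨hu, hp⟩ | ⟨hu, hp⟩
      · have f1 : k1 ≤ a ∨ n - k1 ≤ t - a := Pk1_t.mp hp
        have f2 : ¬ (k ≤ a ∨ n - k ≤ t - a) := fun h => by
          have := Pk_t.mpr h; omega
        have f3 : k ≤ a + 1 ∨ n - k ≤ T - (a + 1) := Pk_T.mp (le_of_eq hu)
        clear * - f1 f2 f3 hk1d hat hTt hTn hn hk hk1n; omega
      · have f1 : k ≤ a ∨ n - k ≤ t - a := Pk_t.mp hp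
        have f2 : ¬ (k1 ≤ a ∨ n - k1 ≤ t - a) := fun h => by
          have := Pk1_t.mpr h; omega
        have f3 : k1 ≤ a + 1 ∨ n - k1 ≤ T - (a + 1) := Pk1_T.mp (le_of_eq hu)
        clear * - f1 f2 f3 hk1d hat hTt hTn hn hk hk1n; omega
    have hj : k' = n - 1 - (t - a) := by
      rcases Dj with ⟨hp', hq'⟩ | ⟨hp', hq'⟩
      · have g1 : k' ≤ a ∨ n - k' ≤ t - a := Pk'_t.mp hp'
        have g2 : ¬ (k1' ≤ a + 1 ∨ n - k1' ≤ T - (a + 1)) := fun h => by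
          have := Pk1'_T.mpr h; omega
        clear * - g1 g2 hk1d' hat hTt hTn hn hk'; omega
      · have g1 : k1' ≤ a ∨ n - k1' ≤ t - a := Pk1'_t.mp hp'
        have g2 : ¬ (k' ≤ a + 1 ∨ n - k' ≤ T - (a + 1)) := fun h => by
          have := Pk'_T.mpr h; omega
        clear * - g1 g2 hk1d' hat hTt hTn hn hk'; omega
    rw [hi, hj]
    exact hW
  · -- leftward step
    rw [hgr] at Pk_T Pk1_T Pk'_T Pk1'_T
    have hi : k = n - 1 - (t - a) := by
      rcases Di with ⟨hu, hp⟩ | ⟨hu, hp⟩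
      · have f1 : k1 ≤ a ∨ n - k1 ≤ t - a := Pk1_t.mp hp
        have f2 : ¬ (k ≤ a ∨ n - k ≤ t - a) := fun h => by
          have := Pk_t.mpr h; omega
        have f3 : k ≤ a ∨ n - k ≤ T - a := Pk_T.mp (le_of_eq hu)
        clear * - f1 f2 f3 hk1d hat hTt hTn hn hk hk1n; omega
      · have f1 : k ≤ a ∨ n - k ≤ t - a := Pk_t.mp hp
        have f2 : ¬ (k1 ≤ a ∨ n - k1 ≤ t - a) := fun h => by
          have := Pk1_t.mpr h; omega
        have f3 : k1 ≤ a ∨ n - k1 ≤ T - a := Pk1_T.mp (le_of_eq hu)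
        clear * - f1 f2 f3 hk1d hat hTt hTn hn hk hk1n; omega
    have hj : k' = a := by
      rcases Dj with ⟨hp', hq'⟩ | ⟨hp', hq'⟩
      · have g1 : k' ≤ a ∨ n - k' ≤ t - a := Pk'_t.mp hp'
        have g2 : ¬ (k1' ≤ a ∨ n - k1' ≤ T - a) := fun h => by
          have := Pk1'_T.mpr h; omega
        clear * - g1 g2 hk1d' hat hTt hTn hn hk'; omega
      · have g1 : k1' ≤ a ∨ n - k1' ≤ t - a := Pk1'_t.mp hp'
        have g2 : ¬ (k' ≤ a ∨ n - k' ≤ T - a) := fun h => by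
          have := Pk'_T.mpr h; omega
        clear * - g1 g2 hk1d' hat hTt hTn hn hk'; omega
    rw [hi, hj]
    exact le_of_lt (not_le.mp hW)

end CycleOnePageAux

/-- **One-page PQ-layout of a cycle with prescribed leftmost vertex.**  The cycle
on `Fin n` has edges `{i, i+1}` (addition mod `n`) of weight `w i`.  For any
prescribed vertex `v0` there is a spine ordering `f` with `v0` leftmost such that
no two cycle edges `e, e'` satisfy `lpos e' < rpos e < rpos e'` and `w e > w e'`. -/
theorem cycle_one_page (n : ℕ) (hn : 3 ≤ n) (w : Fin n → ℝ) (v0 : Fin n) :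
    ∃ f : Fin n → ℕ, Function.Injective f ∧
      (∀ v, v ≠ v0 → f v0 < f v) ∧
      (∀ i j : Fin n,
        min (f j) (f (j + (⟨1, by omega⟩ : Fin n))) < max (f i) (f (i + (⟨1, by omega⟩ : Fin n))) →
        max (f i) (f (i + (⟨1, by omega⟩ : Fin n))) < max (f j) (f (j + (⟨1, by omega⟩ : Fin n))) →
        w i ≤ w j) := by
  haveI : NeZero n := ⟨by omega⟩
  open Fin.NatCast in set W : ℕ → ℝ := fun m => w (v0 + (m : Fin n)) with hWdef
  have hw : ∀ x : Fin n, W ((x - v0).val) = w x := by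
    intro x
    open Fin.NatCast in show w (v0 + ((((x - v0).val) : ℕ) : Fin n)) = w x
    congr 1
    rw [Fin.cast_val_eq_self, add_comm, sub_add_cancel]
  have hkey : ∀ x : Fin n, ((x + (⟨1, by omega⟩ : Fin n)) - v0).val = ((x - v0).val + 1) % n := by
    intro x
    have h1 : x + (⟨1, by omega⟩ : Fin n) - v0 = (x - v0) + (⟨1, by omega⟩ : Fin n) := by
      abel
    rw [h1, Fin.val_add]
  refine ⟨fun u => CycleOnePageAux.g n W ((u - v0).val), ?_, ?_, ?_⟩
  · intro u v h
    have h2 := CycleOnePageAux.g_inj n W (u - v0).isLt (v - v0).isLt h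
    have h3 : u - v0 = v - v0 := Fin.val_injective h2
    exact sub_left_injective h3
  · intro v hv
    have h0 : ((v0 - v0 : Fin n)).val = 0 := by
      rw [sub_self]
      exact Fin.val_zero n
    show CycleOnePageAux.g n W ((v0 - v0).val) < CycleOnePageAux.g n W ((v - v0).val)
    rw [h0, CycleOnePageAux.g_zero]
    have h1 : (v - v0 : Fin n) ≠ 0 := sub_ne_zero.mpr hv
    have h2 : (v - v0).val ≠ 0 := fun h => h1 (Fin.val_injective (by simpa using h))
    exact CycleOnePageAux.g_pos n W (by omega) (v - v0).isLt
  · intro i j hmin hmax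
    rw [← hw i, ← hw j]
    simp only [hkey] at hmin hmax
    exact CycleOnePageAux.main n W hn (i - v0).isLt (j - v0).isLt hmin hmax
end

section
/- The complete bipartite graph K_{2,3} has priority queue number 1: for every edge-weight function w on K_{2,3}, there exists a linear ordering of its 5 vertices such that no two edges e = uv (u ≺ v) and e' = u'v' (u' ≺ v') satisfy v ≺ v' and w(e) > w(e'). -/
private def k23lay (i : Fin 2) (a b : Fin 3) : Fin 2 ⊕ Fin 3 → ℕ :=
  Sum.elim (fun k => if k = i then 1 else 3)
    (fun m => if m = a then 0 else if m = b then 2 else 4)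

private def k23layC (j : Fin 2) (b c : Fin 3) : Fin 2 ⊕ Fin 3 → ℕ :=
  Sum.elim (fun k => if k = j then 2 else 4)
    (fun m => if m = b then 0 else if m = c then 1 else 3)

private lemma cover2 : ∀ i j k : Fin 2, i ≠ j → k = i ∨ k = j := by decide

private lemma cover3 : ∀ a b c m : Fin 3, a ≠ b → a ≠ c → b ≠ c →
    m = a ∨ m = b ∨ m = c := by decide

set_option maxHeartbeats 1000000 in
/-- Template layout `v_a  u_i  v_b  u_j  v_c`. -/
private lemma k23_LA (w : Fin 2 → Fin 3 → ℝ) (i j : Fin 2) (a b c : Fin 3)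
    (hij : i ≠ j) (hab : a ≠ b) (hac : a ≠ c) (hbc : b ≠ c)
    (h1 : w i a ≤ w j a) (h2 : w i b ≤ w j a) (h3 : w i b ≤ w i c)
    (h4 : w j a ≤ w i c) (h5 : w j b ≤ w i c) :
    ∃ f : Fin 2 ⊕ Fin 3 → ℕ, Function.Injective f ∧
      ∀ A B A' B',
        min (f (.inl A')) (f (.inr B')) < max (f (.inl A)) (f (.inr B)) →
        max (f (.inl A)) (f (.inr B)) < max (f (.inl A')) (f (.inr B')) →
        w A B ≤ w A' B' := by
  have vI : k23lay i a b (.inl i) = 1 := by simp [k23lay]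
  have vJ : k23lay i a b (.inl j) = 3 := by simp [k23lay, Ne.symm hij]
  have va : k23lay i a b (.inr a) = 0 := by simp [k23lay]
  have vb : k23lay i a b (.inr b) = 2 := by simp [k23lay, Ne.symm hab]
  have vc : k23lay i a b (.inr c) = 4 := by simp [k23lay, Ne.symm hac, Ne.symm hbc]
  refine ⟨k23lay i a b, ?_, ?_⟩
  · intro s t h
    rcases s with k | m <;> rcases t with k' | m' <;>
      simp only [k23lay, Sum.elim_inl, Sum.elim_inr] at h
    · have : k = k' := by split_ifs at h <;> omega
      exact congrArg _ this
    · exfalso; split_ifs at h <;> omega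
    · exfalso; split_ifs at h <;> omega
    · have : m = m' := by split_ifs at h <;> omega
      exact congrArg _ this
  · intro A B A' B' g1 g2
    rcases cover2 i j A hij with h | h <;> rcases cover2 i j A' hij with h' | h' <;>
      rcases cover3 a b c B hab hac hbc with g | g | g <;>
      rcases cover3 a b c B' hab hac hbc with g' | g' | g' <;>
      simp only [h, h', g, g', vI, vJ, va, vb, vc] at g1 g2 ⊢ <;>
      first | omega | linarith

set_option maxHeartbeats 1000000 in
/-- Template layout `v_b  v_c  u_j  v_a  u_i`. -/
private lemma k23_LC (w : Fin 2 → Fin 3 → ℝ) (i j : Fin 2) (a b c : Fin 3)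
    (hij : i ≠ j) (hab : a ≠ b) (hac : a ≠ c) (hbc : b ≠ c)
    (h1 : w j a ≤ w i b) (h2 : w j b ≤ w i b) (h3 : w j c ≤ w i b)
    (h4 : w j a ≤ w i c) (h5 : w j b ≤ w i c) (h6 : w j c ≤ w i c) :
    ∃ f : Fin 2 ⊕ Fin 3 → ℕ, Function.Injective f ∧
      ∀ A B A' B',
        min (f (.inl A')) (f (.inr B')) < max (f (.inl A)) (f (.inr B)) →
        max (f (.inl A)) (f (.inr B)) < max (f (.inl A')) (f (.inr B')) →
        w A B ≤ w A' B' := by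
  have vI : k23layC j b c (.inl i) = 4 := by simp [k23layC, hij]
  have vJ : k23layC j b c (.inl j) = 2 := by simp [k23layC]
  have va : k23layC j b c (.inr a) = 3 := by simp [k23layC, hab, hac]
  have vb : k23layC j b c (.inr b) = 0 := by simp [k23layC]
  have vc : k23layC j b c (.inr c) = 1 := by simp [k23layC, Ne.symm hbc]
  refine ⟨k23layC j b c, ?_, ?_⟩
  · intro s t h
    rcases s with k | m <;> rcases t with k' | m' <;>
      simp only [k23layC, Sum.elim_inl, Sum.elim_inr] at h
    · have : k = k' := by split_ifs at h <;> omega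
      exact congrArg _ this
    · exfalso; split_ifs at h <;> omega
    · exfalso; split_ifs at h <;> omega
    · have : m = m' := by split_ifs at h <;> omega
      exact congrArg _ this
  · intro A B A' B' g1 g2
    rcases cover2 i j A hij with h | h <;> rcases cover2 i j A' hij with h' | h' <;>
      rcases cover3 a b c B hab hac hbc with g | g | g <;>
      rcases cover3 a b c B' hab hac hbc with g' | g' | g' <;>
      simp only [h, h', g, g', vI, vJ, va, vb, vc] at g1 g2 ⊢ <;>
      first | omega | linarith

private lemma k23_aux (w : Fin 2 → Fin 3 → ℝ) (i j : Fin 2) (a b c : Fin 3)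
    (hij : i ≠ j) (hab : a ≠ b) (hac : a ≠ c) (hbc : b ≠ c)
    (hm : ∀ k m, w k m ≤ w i c) (hiab : w i a ≤ w i b) :
    ∃ f : Fin 2 ⊕ Fin 3 → ℕ, Function.Injective f ∧
      ∀ A B A' B',
        min (f (.inl A')) (f (.inr B')) < max (f (.inl A)) (f (.inr B)) →
        max (f (.inl A)) (f (.inr B)) < max (f (.inl A')) (f (.inr B')) →
        w A B ≤ w A' B' := by
  rcases le_total (w i b) (w j a) with h2 | h2
  · exact k23_LA w i j a b c hij hab hac hbc (hiab.trans h2) h2 (hm i b) (hm j a) (hm j b)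
  · rcases le_total (w i b) (w j b) with h3 | h3
    · exact k23_LA w i j b a c hij (Ne.symm hab) hbc hac h3 (hiab.trans h3) (hm i a)
        (hm j b) (hm j a)
    · rcases le_total (w i b) (w j c) with h4 | h4
      · exact k23_LA w j i b a c (Ne.symm hij) (Ne.symm hab) hbc hac h3 h2
          (h2.trans h4) h4 (hiab.trans h4)
      · exact k23_LC w i j a b c hij hab hac hbc h2 h3 h4 (hm j a) (hm j b) (hm j c)

/-- **`pqn(K_{2,3}) = 1`.**  For every edge-weight function `w` on the complete
bipartite graph with parts `Fin 2` and `Fin 3` there is an injective spine ordering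
`f` of the five vertices with no forbidden configuration: there are no two edges
`(a, b)`, `(a', b')` with `lpos (a', b') < rpos (a, b) < rpos (a', b')` and
`w a b > w a' b'`. -/
theorem k23_pqn_one (w : Fin 2 → Fin 3 → ℝ) :
    ∃ f : Fin 2 ⊕ Fin 3 → ℕ, Function.Injective f ∧
      ∀ a b a' b',
        min (f (.inl a')) (f (.inr b')) < max (f (.inl a)) (f (.inr b)) →
        max (f (.inl a)) (f (.inr b)) < max (f (.inl a')) (f (.inr b')) →
        w a b ≤ w a' b' := by
  obtain ⟨⟨i, c⟩, hm⟩ : ∃ p : Fin 2 × Fin 3, ∀ q : Fin 2 × Fin 3, w q.1 q.2 ≤ w p.1 p.2 :=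
    Finite.exists_max (fun p : Fin 2 × Fin 3 => w p.1 p.2)
  have hm' : ∀ k m, w k m ≤ w i c := fun k m => hm (k, m)
  set j : Fin 2 := i + 1 with hj
  set x : Fin 3 := c + 1 with hx
  set y : Fin 3 := c + 2 with hy
  have hij : i ≠ j := by omega
  have hxy : x ≠ y := by omega
  have hxc : x ≠ c := by omega
  have hyc : y ≠ c := by omega
  rcases le_total (w i x) (w i y) with h | h
  · exact k23_aux w i j x y c hij hxy hxc hyc hm' h
  · exact k23_aux w i j y x c hij (Ne.symm hxy) hyc hxc hm' h
end

section
/- The complete graph K_4 has priority queue number strictly greater than 1: there exists an edge-weight function w on K_4 (with vertices a,b,c,d, where w(ab) is maximal, w(cd) second largest, and the other weights strictly smaller) such that no linear ordering of the four vertices avoids the forbidden configuration. -/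
/-- **`pqn(K_4) > 1`.**  There is an edge-weight function `w` on the complete graph
on `Fin 4` (vertices `a = 0`, `b = 1`, `c = 2`, `d = 3`, where `w(ab)` is maximal,
`w(cd)` second largest, and all other weights strictly smaller) such that *every*
injective spine ordering `f` contains a forbidden configuration: two edges
`e = uv`, `e' = u'v'` with `f u < f v`, `f u' < f v'`, `f u' < f v < f v'` and
`w e > w e'`. -/
theorem k4_pqn_gt_one :
    ∃ w : Sym2 (Fin 4) → ℝ,
      (w s((2 : Fin 4), (3 : Fin 4)) < w s((0 : Fin 4), (1 : Fin 4))) ∧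
      (∀ u v : Fin 4, u ≠ v →
        s(u, v) ≠ s((0 : Fin 4), (1 : Fin 4)) →
        s(u, v) ≠ s((2 : Fin 4), (3 : Fin 4)) →
        w s(u, v) < w s((2 : Fin 4), (3 : Fin 4))) ∧
      ∀ f : Fin 4 → ℕ, Function.Injective f →
        ∃ u v u' v' : Fin 4, u ≠ v ∧ u' ≠ v' ∧
          f u < f v ∧ f u' < f v' ∧ f u' < f v ∧ f v < f v' ∧
          w s(u', v') < w s(u, v) := by
  refine ⟨fun e => if e = s((0:Fin 4),(1:Fin 4)) then 2
      else if e = s((2:Fin 4),(3:Fin 4)) then 1 else 0, ?_, ?_, ?_⟩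
  · beta_reduce; rw [if_neg (by decide), if_pos (by decide), if_pos rfl]; norm_num
  · intro u v _ h1 h2
    beta_reduce; rw [if_neg h1, if_neg h2, if_neg (by decide), if_pos rfl]; norm_num
  · intro f hf
    rcases (hf.ne (show (0:Fin 4) ≠ 1 by decide)).lt_or_gt with h01 | h01 <;>
    rcases (hf.ne (show (2:Fin 4) ≠ 3 by decide)).lt_or_gt with h23 | h23
    · rcases (hf.ne (show (1:Fin 4) ≠ 3 by decide)).lt_or_gt with h | h
      · exact ⟨0, 1, 0, 3, by decide, by decide, h01, h01.trans h, h01, h,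
          by beta_reduce; rw [if_neg (by decide), if_neg (by decide), if_pos (by decide)]; norm_num⟩
      · exact ⟨2, 3, 2, 1, by decide, by decide, h23, h23.trans h, h23, h,
          by beta_reduce; rw [if_neg (by decide), if_neg (by decide), if_neg (by decide),
            if_pos (by decide)]; norm_num⟩
    · rcases (hf.ne (show (1:Fin 4) ≠ 2 by decide)).lt_or_gt with h | h
      · exact ⟨0, 1, 0, 2, by decide, by decide, h01, h01.trans h, h01, h,
          by beta_reduce; rw [if_neg (by decide), if_neg (by decide), if_pos (by decide)]; norm_num⟩
      · exact ⟨3, 2, 3, 1, by decide, by decide, h23, h23.trans h, h23, h,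
          by beta_reduce; rw [if_neg (by decide), if_neg (by decide), if_neg (by decide),
            if_pos (by decide)]; norm_num⟩
    · rcases (hf.ne (show (0:Fin 4) ≠ 3 by decide)).lt_or_gt with h | h
      · exact ⟨1, 0, 1, 3, by decide, by decide, h01, h01.trans h, h01, h,
          by beta_reduce; rw [if_neg (by decide), if_neg (by decide), if_pos (by decide)]; norm_num⟩
      · exact ⟨2, 3, 2, 0, by decide, by decide, h23, h23.trans h, h23, h,
          by beta_reduce; rw [if_neg (by decide), if_neg (by decide), if_neg (by decide),
            if_pos (by decide)]; norm_num⟩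
    · rcases (hf.ne (show (0:Fin 4) ≠ 2 by decide)).lt_or_gt with h | h
      · exact ⟨1, 0, 1, 2, by decide, by decide, h01, h01.trans h, h01, h,
          by beta_reduce; rw [if_neg (by decide), if_neg (by decide), if_pos (by decide)]; norm_num⟩
      · exact ⟨3, 2, 3, 0, by decide, by decide, h23, h23.trans h, h23, h,
          by beta_reduce; rw [if_neg (by decide), if_neg (by decide), if_neg (by decide),
            if_pos (by decide)]; norm_num⟩
end

section
/- Let G be an interval graph given by an interval representation {[a_v, b_v]}_{v ∈ V} with all endpoints distinct, and let χ be a proper vertex coloring of G with c colors. Order the vertices by increasing right endpoints b_v, and assign each edge to the page given by the color of its right endpoint in this ordering. Then for every edge-weight function w, this is a valid PQ-layout with c pages; in particular, every graph of pathwidth at most p satisfies pqn(G) ≤ p + 1. -/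
private lemma mixLe {n a b i j : ℕ} (hi : i < n) (hj : j < n)
    (h : a * n + i ≤ b * n + j) : a ≤ b := by
  by_contra h'
  push_neg at h'
  nlinarith

private lemma mixEq {n a b i j : ℕ} (hi : i < n) (hj : j < n)
    (h : a * n + i = b * n + j) : a = b ∧ i = j := by
  have h1 : a ≤ b := mixLe hi hj h.le
  have h2 : b ≤ a := mixLe hj hi h.ge
  have : a = b := le_antisymm h1 h2
  subst this
  exact ⟨rfl, by omega⟩

private lemma greedy_color (V : Type) [Fintype V] [DecidableEq V] (p : ℕ) (ord : V → ℕ)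
    (hord : Function.Injective ord)
    (S : V → Finset V) (hS : ∀ v, ∀ u ∈ S v, ord u < ord v)
    (hcard : ∀ v, (S v).card ≤ p) :
    ∃ χ : V → Fin (p + 1), ∀ v, ∀ u ∈ S v, χ u ≠ χ v := by
  suffices h : ∀ k, ∃ χ : V → Fin (p + 1), ∀ v, ord v < k → ∀ u ∈ S v, χ u ≠ χ v by
    obtain ⟨χ, hχ⟩ := h ((Finset.univ.sup ord) + 1)
    exact ⟨χ, fun v => hχ v (Nat.lt_succ_of_le (Finset.le_sup (Finset.mem_univ v)))⟩
  intro k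
  induction k with
  | zero => exact ⟨fun _ => 0, fun v h => absurd h (Nat.not_lt_zero _)⟩
  | succ k ih =>
    obtain ⟨χ, hχ⟩ := ih
    by_cases hex : ∃ v0 : V, ord v0 = k
    · obtain ⟨v0, hv0⟩ := hex
      have hlt : ((S v0).image χ).card < (Finset.univ : Finset (Fin (p + 1))).card := by
        calc ((S v0).image χ).card ≤ (S v0).card := Finset.card_image_le
          _ ≤ p := hcard v0
          _ < p + 1 := Nat.lt_succ_self p
          _ = (Finset.univ : Finset (Fin (p + 1))).card := by simp
      have hns : ¬ (Finset.univ : Finset (Fin (p + 1))) ⊆ (S v0).image χ :=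
        fun h => absurd (Finset.card_le_card h) (not_le.mpr hlt)
      obtain ⟨c, -, hc⟩ := Finset.not_subset.mp hns
      refine ⟨Function.update χ v0 c, ?_⟩
      intro v hv u hu
      have huv : ord u < ord v := hS v u hu
      rcases Nat.lt_succ_iff_lt_or_eq.mp hv with hv' | hv'
      · have hune : u ≠ v0 := fun h => by subst h; omega
        have hvne : v ≠ v0 := fun h => by subst h; omega
        rw [Function.update_of_ne hune, Function.update_of_ne hvne]
        exact hχ v hv' u hu
      · have hveq : v = v0 := hord (hv'.trans hv0.symm)
        subst hveq
        have hune : u ≠ v := fun h => by subst h; omega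
        rw [Function.update_of_ne hune, Function.update_self]
        intro h
        exact hc (h ▸ Finset.mem_image_of_mem χ hu)
    · refine ⟨χ, fun v hv u hu => ?_⟩
      rcases Nat.lt_succ_iff_lt_or_eq.mp hv with hv' | hv'
      · exact hχ v hv' u hu
      · exact absurd ⟨v, hv'⟩ hex

/-- **Interval graphs, proper colorings and PQ-layouts; pathwidth bound.**
(1) Let `G` be the interval graph of intervals `[a v, b v]` with pairwise distinct
right endpoints, and let `χ` be a proper coloring with `c` colors.  Ordering the
vertices by increasing right endpoint `b` and assigning each edge the color of its
right endpoint yields, for *every* edge-weight function `w`, a valid PQ-layout with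
`c` pages (no page contains a forbidden configuration).
(2) Consequently, every graph of pathwidth at most `p` (witnessed by a path
decomposition with bags of size at most `p + 1`) satisfies `pqn(G) ≤ p + 1`. -/
theorem interval_coloring_layout_and_pathwidth :
    (∀ (V : Type) (a b : V → ℝ) (c : ℕ) (χ : V → Fin c),
      (∀ v, a v < b v) →
      (∀ u v, u ≠ v → b u ≠ b v) →
      (∀ u v, u ≠ v → a u ≤ b v → a v ≤ b u → χ u ≠ χ v) →
      ∀ (w : V → V → ℝ) (u v u' v' : V),
        (u ≠ v ∧ a u ≤ b v ∧ a v ≤ b u) →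
        (u' ≠ v' ∧ a u' ≤ b v' ∧ a v' ≤ b u') →
        b u < b v → b u' < b v' → χ v = χ v' →
        b u' < b v → b v < b v' →
        w u v ≤ w u' v') ∧
    (∀ (V : Type) [Fintype V] [DecidableEq V] (G : SimpleGraph V) (p t : ℕ)
      (bags : Fin t → Finset V),
      (∀ i, (bags i).card ≤ p + 1) →
      (∀ v, ∃ i, v ∈ bags i) →
      (∀ u v, G.Adj u v → ∃ i, u ∈ bags i ∧ v ∈ bags i) →
      (∀ v (i j l : Fin t), i ≤ j → j ≤ l → v ∈ bags i → v ∈ bags l → v ∈ bags j) →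
      ∀ w : V → V → ℝ,
        ∃ (f : V → ℕ) (page : V → V → Fin (p + 1)),
          Function.Injective f ∧
          ∀ u v u' v', G.Adj u v → G.Adj u' v' →
            page u v = page u' v' →
            f u < f v → f u' < f v' → f u' < f v → f v < f v' →
            w u v ≤ w u' v') := by
  constructor
  · -- Part 1
    intro V a b c χ hab hdist hproper w u v u' v' he he' huv hu'v' hpage h1 h2
    exfalso
    refine hproper v v' (fun h => absurd (h ▸ h2) (lt_irrefl _)) ?_ ?_ hpage
    · exact le_of_lt (lt_trans (hab v) h2)
    · exact le_trans he'.2.2 (le_of_lt h1)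
  · -- Part 2
    intro V _ _ G p t bags hbcard hcover hedge hconvex w
    classical
    set n := Fintype.card V with hn
    set ι : V ≃ Fin n := Fintype.equivFin V with hι
    have hιlt : ∀ v : V, (ι v).val < n := fun v => (ι v).isLt
    set I : V → Finset (Fin t) := fun v => Finset.univ.filter (fun i => v ∈ bags i) with hI
    have hIne : ∀ v, (I v).Nonempty := by
      intro v
      obtain ⟨i, hi⟩ := hcover v
      exact ⟨i, by simp [hI, hi]⟩
    set fst : V → Fin t := fun v => (I v).min' (hIne v) with hfst
    set lst : V → Fin t := fun v => (I v).max' (hIne v) with hlst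
    have hmemI : ∀ v i, i ∈ I v ↔ v ∈ bags i := by
      intro v i; simp [hI]
    have hfst_mem : ∀ v, v ∈ bags (fst v) := fun v =>
      (hmemI v _).mp ((I v).min'_mem (hIne v))
    have hlst_mem : ∀ v, v ∈ bags (lst v) := fun v =>
      (hmemI v _).mp ((I v).max'_mem (hIne v))
    have hfl : ∀ v i, v ∈ bags i → fst v ≤ i ∧ i ≤ lst v := by
      intro v i hi
      exact ⟨(I v).min'_le i ((hmemI v i).mpr hi), (I v).le_max' i ((hmemI v i).mpr hi)⟩
    have hmem : ∀ v (j : Fin t), fst v ≤ j → j ≤ lst v → v ∈ bags j := by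
      intro v j h1 h2
      exact hconvex v (fst v) j (lst v) h1 h2 (hfst_mem v) (hlst_mem v)
    have hfstlst : ∀ v, fst v ≤ lst v := fun v => (hfl v _ (hlst_mem v)).1
    set f : V → ℕ := fun v => (lst v).val * n + (ι v).val with hf
    set ord : V → ℕ := fun v => (fst v).val * n + (ι v).val with hordd
    have hf_inj : Function.Injective f := by
      intro u v h
      have := (mixEq (hιlt u) (hιlt v) h).2
      exact ι.injective (Fin.val_injective this)
    have hord_inj : Function.Injective ord := by
      intro u v h
      have := (mixEq (hιlt u) (hιlt v) h).2
      exact ι.injective (Fin.val_injective this)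
    set S : V → Finset V := fun v => (bags (fst v)).filter (fun u => ord u < ord v) with hSdef
    have hS : ∀ v, ∀ u ∈ S v, ord u < ord v := by
      intro v u hu
      exact (Finset.mem_filter.mp hu).2
    have hScard : ∀ v, (S v).card ≤ p := by
      intro v
      have hsub : S v ⊆ (bags (fst v)).erase v := by
        intro u hu
        rw [Finset.mem_filter] at hu
        refine Finset.mem_erase.mpr ⟨?_, hu.1⟩
        intro h; subst h; exact absurd hu.2 (lt_irrefl _)
      calc (S v).card ≤ ((bags (fst v)).erase v).card := Finset.card_le_card hsub
        _ = (bags (fst v)).card - 1 := Finset.card_erase_of_mem (hfst_mem v)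
        _ ≤ (p + 1) - 1 := Nat.sub_le_sub_right (hbcard _) 1
        _ = p := rfl
    obtain ⟨χ, hχ⟩ := greedy_color V p ord hord_inj S hS hScard
    -- properness on overlapping intervals
    have hproper : ∀ u v : V, u ≠ v → fst u ≤ lst v → fst v ≤ lst u → χ u ≠ χ v := by
      intro u v huv h1 h2
      rcases lt_trichotomy (ord u) (ord v) with h | h | h
      · have hfuv : (fst u).val ≤ (fst v).val := mixLe (hιlt u) (hιlt v) h.le
        have humem : u ∈ bags (fst v) := hmem u (fst v) hfuv h2
        exact hχ v u (Finset.mem_filter.mpr ⟨humem, h⟩)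
      · exact absurd (hord_inj h) huv
      · have hfvu : (fst v).val ≤ (fst u).val := mixLe (hιlt v) (hιlt u) h.le
        have hvmem : v ∈ bags (fst u) := hmem v (fst u) hfvu h1
        exact fun hc => hχ u v (Finset.mem_filter.mpr ⟨hvmem, h⟩) hc.symm
    refine ⟨f, fun _ v => χ v, hf_inj, ?_⟩
    intro u v u' v' hadj hadj' hpage h1 h2 h3 h4
    exfalso
    obtain ⟨i, hui, hvi⟩ := hedge u v hadj
    obtain ⟨i', hui', hvi'⟩ := hedge u' v' hadj'
    have h5 : (lst u').val ≤ (lst v).val := mixLe (hιlt u') (hιlt v) h3.le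
    have h6 : (lst v).val ≤ (lst v').val := mixLe (hιlt v) (hιlt v') h4.le
    have hvne : v ≠ v' := fun h => by subst h; exact absurd h4 (lt_irrefl _)
    -- fst v ≤ lst v'
    have ha : (fst v).val ≤ (lst v').val := le_trans (hfstlst v) h6
    -- fst v' ≤ lst u' ≤ lst v
    have hb : (fst v').val ≤ (lst v).val :=
      le_trans (le_trans (hfl v' i' hvi').1 (hfl u' i' hui').2) h5
    exact hproper v v' hvne ha hb hpage
end
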